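/- Consider a finite set N of agents, numbers Mᵢ > 0, bounds 0 < μᵢ ≤ M* := minᵢ Mᵢ, gains kᵢ satisfying 0 < kᵢ ≤ 1/|[i]∖{i}| where [i] ⊆ N with i ∈ [i], and nonnegative signals hᵢ : ℕ → ℝ≥0. Let xᵢ evolve as xᵢ(t+1) = proj_{[μᵢ, Mᵢ]}( e^{hᵢ(t)} xᵢ(t) + kᵢ·∑_{j∈[i]} (xⱼ(t) − xᵢ(t)) ). If at some time t̄ one has min_{i∈N} xᵢ(t̄) ≥ M*, then min_{i∈N} xᵢ(t) ≥ M* for all t ≥ t̄. -/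

import Mathlib

theorem stmt_8 {N : Type*} [Fintype N] [DecidableEq N] [Nonempty N]
    (nbhd : N → Finset N) (hmem : ∀ i, i ∈ nbhd i)
    (M μ k : N → ℝ) (h : N → ℕ → ℝ) (Mstar : ℝ)
    (hMstar : IsLeast (Set.range M) Mstar)
    (hμ : ∀ i, 0 < μ i) (hμM : ∀ i, μ i ≤ Mstar)
    (hk : ∀ i, 0 < k i)
    (hk2 : ∀ i, ((nbhd i).erase i).card ≠ 0 →
      k i ≤ 1 / (((nbhd i).erase i).card : ℝ))
    (hh : ∀ i t, 0 ≤ h i t)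
    (x : ℕ → N → ℝ)
    (hdyn : ∀ t i, x (t + 1) i =
      min (max (Real.exp (h i t) * x t i +
        k i * ∑ j ∈ nbhd i, (x t j - x t i)) (μ i)) (M i))
    (tb : ℕ) (hinit : ∀ i, Mstar ≤ x tb i) :
    ∀ t, tb ≤ t → ∀ i, Mstar ≤ x t i := by
  have hMs_pos : 0 < Mstar := lt_of_lt_of_le (hμ (Classical.arbitrary N)) (hμM _)
  intro t ht
  induction t, ht using Nat.le_induction with
  | base => exact hinit
  | succ t ht ih =>
    intro i
    rw [hdyn t i]
    have hMi : Mstar ≤ M i := hMstar.2 ⟨i, rfl⟩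
    have hxi : Mstar ≤ x t i := ih i
    set c : ℕ := ((nbhd i).erase i).card with hc
    -- sum over nbhd = sum over erase
    have hsum : ∑ j ∈ nbhd i, (x t j - x t i)
        = ∑ j ∈ (nbhd i).erase i, (x t j - x t i) := by
      rw [← Finset.add_sum_erase _ _ (hmem i)]
      ring
    have hkc : (k i) * c ≤ 1 := by
      rcases Nat.eq_zero_or_pos c with h0 | hpos
      · simp [h0]
      · have := hk2 i hpos.ne'
        have hcpos : (0:ℝ) < c := by exact_mod_cast hpos
        rw [div_eq_inv_mul, mul_one] at this
        calc k i * c ≤ (c:ℝ)⁻¹ * c := by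
              exact mul_le_mul_of_nonneg_right this hcpos.le
          _ = 1 := inv_mul_cancel₀ hcpos.ne'
    have hsumlb : (c : ℝ) * (Mstar - x t i) ≤ ∑ j ∈ (nbhd i).erase i, (x t j - x t i) := by
      have := Finset.card_nsmul_le_sum ((nbhd i).erase i)
        (fun j => x t j - x t i) (Mstar - x t i)
        (fun j _ => by show Mstar - x t i ≤ x t j - x t i; linarith [ih j])
      simpa [nsmul_eq_mul] using this
    have hexp : x t i ≤ Real.exp (h i t) * x t i := by
      nlinarith [Real.one_le_exp (hh i t)]
    have hkey : Mstar ≤ Real.exp (h i t) * x t i +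
        k i * ∑ j ∈ nbhd i, (x t j - x t i) := by
      rw [hsum]
      have h1 : k i * ((c : ℝ) * (Mstar - x t i)) ≤
          k i * ∑ j ∈ (nbhd i).erase i, (x t j - x t i) :=
        mul_le_mul_of_nonneg_left hsumlb (hk i).le
      have h2 : Mstar - x t i ≤ k i * ((c : ℝ) * (Mstar - x t i)) := by
        nlinarith [hk i, Nat.cast_nonneg (α := ℝ) c]
      linarith
    exact le_min (le_max_of_le_left hkey) hMi
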